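/- Epoch-sum bound for empirical errors (auxiliary lemma): let m ≥ 1 and let τ₀, τ₁, …, τ_{m+1} and e₁, …, e_{m+1} be real numbers with τ₀ = 0, τ₁ ≥ 3, τ_{i−1} ≤ τ_i ≤ 2·τ_{i−1} for all 2 ≤ i ≤ m+1, e_i ≥ 0 for all i, e₁ ≤ e₂, and τ_{i−1}·e_i ≤ τ_i·e_{i+1} for all 2 ≤ i ≤ m. Then ∑_{i=1}^{m} (τ_i − τ_{i−1})·e_i ≤ 4·τ_m·(log τ_{m+1})·e_{m+1}, where log denotes the natural logarithm. -/
import Mathlib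


/-- Epoch-sum bound for empirical errors (auxiliary lemma):
`∑_{i=1}^m (τ_i − τ_{i−1})·e_i ≤ 4·τ_m·(log τ_{m+1})·e_{m+1}`. -/
theorem epoch_sum_error_bound
    (m : ℕ) (hm : 1 ≤ m)
    (τ : ℕ → ℝ) (e : ℕ → ℝ)
    (hτ0 : τ 0 = 0)
    (hτ1 : 3 ≤ τ 1)
    (hτmono : ∀ i, 2 ≤ i → i ≤ m + 1 → τ (i - 1) ≤ τ i ∧ τ i ≤ 2 * τ (i - 1))
    (he : ∀ i, 0 ≤ e i)
    (he12 : e 1 ≤ e 2)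
    (hchain : ∀ i, 2 ≤ i → i ≤ m → τ (i - 1) * e i ≤ τ i * e (i + 1)) :
    ∑ i ∈ Finset.Icc 1 m, (τ i - τ (i - 1)) * e i
      ≤ 4 * τ m * Real.log (τ (m + 1)) * e (m + 1) := by
  -- positivity of τ
  have hpos : ∀ i, 1 ≤ i → i ≤ m + 1 → (3:ℝ) ≤ τ i := by
    intro i h1 h2
    induction i with
    | zero => omega
    | succ n ih =>
      rcases Nat.lt_or_ge 1 (n+1) with h | h
      · have hn1 : 1 ≤ n := by omega
        have hmono := (hτmono (n+1) (by omega) h2).1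
        have hn3 := ih hn1 (by omega)
        simpa using le_trans hn3 (by simpa using hmono)
      · have : n = 0 := by omega
        subst this; exact hτ1
  -- chain bound: τ_{i-1} e_i ≤ τ_m e_{m+1}
  have haux : ∀ j i, 2 ≤ i → i + j = m + 1 → τ (i-1) * e i ≤ τ m * e (m+1) := by
    intro j
    induction j with
    | zero =>
      intro i h2 hsum
      have : i = m + 1 := by omega
      subst this
      simp
    | succ j ih =>
      intro i h2 hsum
      have him : i ≤ m := by omega
      have h1 := hchain i h2 him
      have h2' := ih (i+1) (by omega) (by omega)
      have : τ ((i+1) - 1) = τ i := by norm_num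
      rw [this] at h2'
      linarith
  have hM : (0:ℝ) ≤ τ m * e (m+1) := by
    have := hpos m hm (by omega)
    exact mul_nonneg (by linarith) (he _)
  -- key log inequality
  have hlog : ∀ a b : ℝ, 0 < a → a ≤ b → b ≤ 2*a →
      b - a ≤ 2*a*(Real.log b - Real.log a) := by
    intro a b ha hab hb2
    have hb : 0 < b := lt_of_lt_of_le ha hab
    have h1 : Real.log (a/b) ≤ a/b - 1 := Real.log_le_sub_one_of_pos (by positivity)
    have h2 : Real.log (a/b) = Real.log a - Real.log b := Real.log_div (ne_of_gt ha) (ne_of_gt hb)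
    rw [h2] at h1
    have key : 1 - a/b ≤ Real.log b - Real.log a := by linarith
    have hba : (b - a)/b ≤ Real.log b - Real.log a := by
      have : 1 - a/b = (b-a)/b := by field_simp
      linarith [this ▸ key]
    have h3 : b - a ≤ 2*a*((b-a)/b) := by
      have : b - a ≤ 2*a*(b-a)/b := by
        rw [le_div_iff₀ hb]; nlinarith [sub_nonneg.mpr hab, sub_nonneg.mpr hb2]
      linarith [this, (by ring : 2*a*(b-a)/b = 2*a*((b-a)/b))]
    calc b - a ≤ 2*a*((b-a)/b) := h3
      _ ≤ 2*a*(Real.log b - Real.log a) := by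
          apply mul_le_mul_of_nonneg_left hba (by linarith)
  have hlog1 : (1:ℝ) ≤ Real.log (τ 1) := by
    have he3 : Real.exp 1 ≤ 3 := le_of_lt (lt_trans Real.exp_one_lt_d9 (by norm_num))
    have : Real.log (Real.exp 1) ≤ Real.log (τ 1) :=
      Real.log_le_log (Real.exp_pos 1) (le_trans he3 hτ1)
    simpa using this
  -- main induction
  have hmain : ∀ k, 1 ≤ k → k ≤ m →
      ∑ i ∈ Finset.Icc 1 k, (τ i - τ (i-1)) * e i
        ≤ 2 * Real.log (τ k) * (τ m * e (m+1)) := by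
    intro k hk1 hkm
    induction k, hk1 using Nat.le_induction with
    | base =>
      simp only [Finset.Icc_self, Finset.sum_singleton]
      have h01 : τ 1 - τ 0 = τ 1 := by rw [hτ0]; ring
      have hτ1e : τ 1 * e 1 ≤ τ 1 * e 2 :=
        mul_le_mul_of_nonneg_left he12 (by linarith)
      have h2M : τ 1 * e 2 ≤ τ m * e (m+1) := by
        have := haux (m - 1) 2 (by omega) (by omega)
        simpa using this
      have : τ 1 * e 1 ≤ τ m * e (m+1) := le_trans hτ1e h2M
      calc (τ 1 - τ (1-1)) * e 1 = τ 1 * e 1 := by norm_num [hτ0]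
        _ ≤ τ m * e (m+1) := this
        _ ≤ 2 * Real.log (τ 1) * (τ m * e (m+1)) := by nlinarith
    | succ k hk ih =>
      have hkm' : k ≤ m := by omega
      have ih' := ih hkm'
      rw [Finset.sum_Icc_succ_top (by omega : 1 ≤ k + 1)]
      have hτk : (3:ℝ) ≤ τ k := hpos k hk (by omega)
      have hmono := hτmono (k+1) (by omega) (by omega)
      have hk1sub : τ ((k+1) - 1) = τ k := by norm_num
      rw [hk1sub] at hmono
      -- term bound
      have hterm : (τ (k+1) - τ ((k+1)-1)) * e (k+1)
          ≤ 2 * (Real.log (τ (k+1)) - Real.log (τ k)) * (τ m * e (m+1)) := by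
        rw [hk1sub]
        have hba := hlog (τ k) (τ (k+1)) (by linarith) hmono.1 hmono.2
        have hke : τ k * e (k+1) ≤ τ m * e (m+1) := by
          have := haux (m - k) (k+1) (by omega) (by omega)
          simpa using this
        have hlognn : 0 ≤ Real.log (τ (k+1)) - Real.log (τ k) := by
          have := Real.log_le_log (by linarith : (0:ℝ) < τ k) hmono.1
          linarith
        have he1 := he (k+1)
        calc (τ (k+1) - τ k) * e (k+1)
            ≤ (2 * τ k * (Real.log (τ (k+1)) - Real.log (τ k))) * e (k+1) :=
              mul_le_mul_of_nonneg_right hba he1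
          _ = 2 * (Real.log (τ (k+1)) - Real.log (τ k)) * (τ k * e (k+1)) := by ring
          _ ≤ 2 * (Real.log (τ (k+1)) - Real.log (τ k)) * (τ m * e (m+1)) := by
              apply mul_le_mul_of_nonneg_left hke (by linarith)
      calc ∑ i ∈ Finset.Icc 1 k, (τ i - τ (i-1)) * e i + (τ (k+1) - τ ((k+1)-1)) * e (k+1)
          ≤ 2 * Real.log (τ k) * (τ m * e (m+1))
            + 2 * (Real.log (τ (k+1)) - Real.log (τ k)) * (τ m * e (m+1)) := by
            exact add_le_add ih' hterm
        _ = 2 * Real.log (τ (k+1)) * (τ m * e (m+1)) := by ring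
  have hfin := hmain m hm le_rfl
  have hτm : (3:ℝ) ≤ τ m := hpos m hm (by omega)
  have hmonoM := hτmono (m+1) (by omega) (by omega)
  have hsub : τ ((m+1) - 1) = τ m := by norm_num
  rw [hsub] at hmonoM
  have hlogm : Real.log (τ m) ≤ Real.log (τ (m+1)) :=
    Real.log_le_log (by linarith) hmonoM.1
  have hlognn : 0 ≤ Real.log (τ (m+1)) := by
    have h1 : Real.log 1 ≤ Real.log (τ (m+1)) :=
      Real.log_le_log (by norm_num) (by linarith)
    simpa using h1
  calc ∑ i ∈ Finset.Icc 1 m, (τ i - τ (i-1)) * e i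
      ≤ 2 * Real.log (τ m) * (τ m * e (m+1)) := hfin
    _ ≤ 4 * τ m * Real.log (τ (m+1)) * e (m+1) := by nlinarith [he (m+1)]
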